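/- Let T > 0 and let y, z : [0,T] × ℝ³ → ℂ be measurable, with y(t,·) and z(t,·) differentiable on ℝ³ for almost every t. Then ‖z·conj(y)‖_{L^{4/3}(0,T;W^{1,3/2}(ℝ³))} ≤ 2 · T^{1/4} · ‖z‖_{L²(0,T;W^{1,6}(ℝ³))} · ess sup_{t∈[0,T]} ‖y(t)‖_{W^{1,2}(ℝ³)}, as an inequality of extended nonnegative reals, where ‖f‖_{L^q(0,T;W^{1,p})} := (∫₀ᵀ ‖f(t)‖_{W^{1,p}}^q dt)^{1/q}. (H¹-level bilinear estimate used for the quadratic nonlinearity in dimension d = 3.) -/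

import Mathlib

open MeasureTheory Filter
open scoped ENNReal Topology

/-- Sobolev `W^{1,p}` norm of a function `f : ℝ³ → ℂ`:
`‖f‖_{W^{1,p}} = ‖f‖_{L^p} + ‖∇f‖_{L^p}`, valued in `[0,∞]`. -/
noncomputable def W1Norm3 (p : ℝ≥0∞) (f : (Fin 3 → ℝ) → ℂ) : ℝ≥0∞ :=
  eLpNorm f p (volume : Measure (Fin 3 → ℝ))
    + eLpNorm (fderiv ℝ f) p (volume : Measure (Fin 3 → ℝ))

lemma norm_conjCLE_comp (L : (Fin 3 → ℝ) →L[ℝ] ℂ) :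
    ‖(Complex.conjCLE : ℂ →L[ℝ] ℂ).comp L‖ = ‖L‖ :=
  Complex.conjLIE.toLinearIsometry.norm_toContinuousLinearMap_comp (g := L)

lemma holder_aux {α E F G : Type*} [MeasurableSpace α] {μ : Measure α}
    [NormedAddCommGroup E] [NormedAddCommGroup F] [NormedAddCommGroup G]
    {f : α → E} {g : α → F} {p q r : ℝ≥0∞} (hf : AEStronglyMeasurable f μ)
    (hg : AEStronglyMeasurable g μ) (b : E → F → G)
    (h : ∀ᵐ x ∂μ, ‖b (f x) (g x)‖ ≤ ‖f x‖ * ‖g x‖) (hpqr : 1 / p = 1 / q + 1 / r) :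
    eLpNorm (fun x => b (f x) (g x)) p μ ≤ eLpNorm f q μ * eLpNorm g r μ := by
  haveI : ENNReal.HolderTriple q r p := ⟨by simpa [one_div] using hpqr.symm⟩
  simpa using eLpNorm_le_eLpNorm_mul_eLpNorm'_of_norm hf hg b 1
    (h.mono fun x hx => by simpa using hx)

lemma pointwise_holder (f g : (Fin 3 → ℝ) → ℂ) (hf : Measurable f) (hg : Measurable g)
    (hdf : Differentiable ℝ f) (hdg : Differentiable ℝ g) :
    W1Norm3 (3/2 : ℝ≥0∞) (fun ξ => g ξ * (starRingEnd ℂ) (f ξ))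
      ≤ W1Norm3 6 g * W1Norm3 2 f := by
  set ν : Measure (Fin 3 → ℝ) := volume
  have hpqr : (1 : ℝ≥0∞)/(3/2) = 1/6 + 1/2 := by
    simp only [one_div]
    rw [← ENNReal.toReal_eq_toReal_iff' (by simp) (by simp)]
    simp [ENNReal.toReal_inv, ENNReal.toReal_add, ENNReal.toReal_div]
    norm_num
  have hfa : AEStronglyMeasurable f ν := hf.aestronglyMeasurable
  have hga : AEStronglyMeasurable g ν := hg.aestronglyMeasurable
  have hdfm : AEStronglyMeasurable (fderiv ℝ f) ν :=
    (measurable_fderiv ℝ f).aestronglyMeasurable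
  have hdgm : AEStronglyMeasurable (fderiv ℝ g) ν :=
    (measurable_fderiv ℝ g).aestronglyMeasurable
  -- L^p part
  have h1 : eLpNorm (fun ξ => g ξ * (starRingEnd ℂ) (f ξ)) (3/2) ν
      ≤ eLpNorm g 6 ν * eLpNorm f 2 ν := by
    refine holder_aux hga hfa
      (fun a b => a * (starRingEnd ℂ) b) (Eventually.of_forall fun ξ => ?_) hpqr
    simp [norm_mul]
  -- derivative of conj ∘ f
  have hconj : ∀ x, fderiv ℝ (fun ξ => (starRingEnd ℂ) (f ξ)) x
      = (Complex.conjCLE : ℂ →L[ℝ] ℂ).comp (fderiv ℝ f x) :=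
    fun x => Complex.conjCLE.comp_fderiv (f := f) (x := x) ▸ rfl
  have hdconj : Differentiable ℝ (fun ξ => (starRingEnd ℂ) (f ξ)) :=
    fun x => (Complex.conjCLE.differentiableAt).comp x (hdf x)
  -- derivative formula
  have hder : ∀ x, fderiv ℝ (fun ξ => g ξ * (starRingEnd ℂ) (f ξ)) x
      = g x • fderiv ℝ (fun ξ => (starRingEnd ℂ) (f ξ)) x
        + (starRingEnd ℂ) (f x) • fderiv ℝ g x :=
    fun x => fderiv_mul (hdg x) (hdconj x)
  have hT1 : eLpNorm (fun x => g x • fderiv ℝ (fun ξ => (starRingEnd ℂ) (f ξ)) x) (3/2) ν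
      ≤ eLpNorm g 6 ν * eLpNorm (fderiv ℝ f) 2 ν := by
    have hm : AEStronglyMeasurable (fderiv ℝ (fun ξ => (starRingEnd ℂ) (f ξ))) ν :=
      (measurable_fderiv ℝ _).aestronglyMeasurable
    have h := holder_aux hga hm
      (fun (a : ℂ) (L : (Fin 3 → ℝ) →L[ℝ] ℂ) => a • L)
      (Eventually.of_forall fun ξ =>
        le_of_eq (norm_smul (g ξ) (fderiv ℝ (fun ξ => (starRingEnd ℂ) (f ξ)) ξ))) hpqr
    refine h.trans (le_of_eq ?_)
    congr 1
    refine eLpNorm_congr_norm_ae (Eventually.of_forall fun x => ?_)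
    rw [hconj x, norm_conjCLE_comp]
  have hT2 : eLpNorm (fun x => (starRingEnd ℂ) (f x) • fderiv ℝ g x) (3/2) ν
      ≤ eLpNorm (fderiv ℝ g) 6 ν * eLpNorm f 2 ν := by
    refine holder_aux hdgm hfa
      (fun (L : (Fin 3 → ℝ) →L[ℝ] ℂ) (a : ℂ) => (starRingEnd ℂ) a • L)
      (Eventually.of_forall fun ξ => ?_) hpqr
    show ‖(starRingEnd ℂ) (f ξ) • fderiv ℝ g ξ‖ ≤ _
    rw [norm_smul ((starRingEnd ℂ) (f ξ)) (fderiv ℝ g ξ), RCLike.norm_conj, mul_comm]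
  have h2 : eLpNorm (fderiv ℝ (fun ξ => g ξ * (starRingEnd ℂ) (f ξ))) (3/2) ν
      ≤ eLpNorm g 6 ν * eLpNorm (fderiv ℝ f) 2 ν
        + eLpNorm (fderiv ℝ g) 6 ν * eLpNorm f 2 ν := by
    have heq : eLpNorm (fderiv ℝ (fun ξ => g ξ * (starRingEnd ℂ) (f ξ))) (3/2) ν
        = eLpNorm (fun x => g x • fderiv ℝ (fun ξ => (starRingEnd ℂ) (f ξ)) x
            + (starRingEnd ℂ) (f x) • fderiv ℝ g x) (3/2) ν := by
      refine eLpNorm_congr_ae (Eventually.of_forall fun x => ?_)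
      exact hder x
    rw [heq]
    have hm1 : AEStronglyMeasurable
        (fun x => g x • fderiv ℝ (fun ξ => (starRingEnd ℂ) (f ξ)) x) ν :=
      hga.smul (measurable_fderiv ℝ _).aestronglyMeasurable
    have hm2 : AEStronglyMeasurable
        (fun x => (starRingEnd ℂ) (f x) • fderiv ℝ g x) ν :=
      ((Complex.continuous_conj.measurable.comp hf).aestronglyMeasurable).smul hdgm
    refine (eLpNorm_add_le hm1 hm2 (by
      rw [ENNReal.le_div_iff_mul_le (by norm_num) (by norm_num)]; norm_num)).trans ?_
    exact add_le_add hT1 hT2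
  calc W1Norm3 (3/2 : ℝ≥0∞) (fun ξ => g ξ * (starRingEnd ℂ) (f ξ))
      ≤ (eLpNorm g 6 ν * eLpNorm f 2 ν)
        + (eLpNorm g 6 ν * eLpNorm (fderiv ℝ f) 2 ν
          + eLpNorm (fderiv ℝ g) 6 ν * eLpNorm f 2 ν) := add_le_add h1 h2
    _ ≤ W1Norm3 6 g * W1Norm3 2 f := by
        unfold W1Norm3
        rw [add_mul, mul_add, mul_add]
        calc eLpNorm g 6 ν * eLpNorm f 2 ν
            + (eLpNorm g 6 ν * eLpNorm (fderiv ℝ f) 2 ν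
              + eLpNorm (fderiv ℝ g) 6 ν * eLpNorm f 2 ν)
            ≤ eLpNorm g 6 ν * eLpNorm f 2 ν
            + (eLpNorm g 6 ν * eLpNorm (fderiv ℝ f) 2 ν
              + (eLpNorm (fderiv ℝ g) 6 ν * eLpNorm f 2 ν
                + eLpNorm (fderiv ℝ g) 6 ν * eLpNorm (fderiv ℝ f) 2 ν)) := by
              gcongr <;> exact le_self_add
          _ = _ := by ring

lemma aemeas_inner {α β : Type*} [MeasurableSpace α] [MeasurableSpace β]
    {μ : Measure α} {ν : Measure β} [SFinite ν] {f : α × β → ℝ≥0∞}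
    (hf : AEMeasurable f (μ.prod ν)) :
    AEMeasurable (fun x => ∫⁻ y, f (x, y) ∂ν) μ := by
  obtain ⟨g, hg, hfg⟩ := hf
  refine ⟨fun x => ∫⁻ y, g (x, y) ∂ν, hg.lintegral_prod_right', ?_⟩
  filter_upwards [Measure.ae_ae_of_ae_prod hfg] with x hx using lintegral_congr_ae hx

noncomputable def Phi3 : (Fin 3 → ℂ) → ((Fin 3 → ℝ) →L[ℝ] ℂ) := fun c =>
  ∑ i, (ContinuousLinearMap.proj (R := ℝ) (φ := fun _ : Fin 3 => ℝ) i).smulRight (c i)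

lemma Phi3_cont : Continuous Phi3 := by
  refine continuous_finset_sum _ fun i _ => ?_
  exact ((ContinuousLinearMap.smulRightL ℝ (Fin 3 → ℝ) ℂ
    (ContinuousLinearMap.proj i)).continuous).comp (continuous_apply i)

lemma Phi3_eq (L : (Fin 3 → ℝ) →L[ℝ] ℂ) :
    Phi3 (fun i => L ((Pi.single i (1:ℝ) : Fin 3 → ℝ))) = L := by
  ext v
  simp only [Phi3, ContinuousLinearMap.sum_apply, ContinuousLinearMap.smulRight_apply,
    ContinuousLinearMap.proj_apply]
  have hv : v = ∑ i, Pi.single i (v i) := by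
    rw [Finset.univ_sum_single]
  conv_rhs => rw [hv]
  rw [map_sum]
  refine Finset.sum_congr rfl fun i _ => ?_
  have : (Pi.single i (v i) : Fin 3 → ℝ) = v i • (Pi.single i (1:ℝ) : Fin 3 → ℝ) := by
    rw [← Pi.single_smul, smul_eq_mul, mul_one]
  rw [this, ContinuousLinearMap.map_smul]

lemma aemeas_norm_fderiv {T : ℝ} {z : ℝ → (Fin 3 → ℝ) → ℂ}
    (hz : Measurable (Function.uncurry z))
    (hdiff : ∀ᵐ t ∂((volume : Measure ℝ).restrict (Set.Icc (0:ℝ) T)),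
      Differentiable ℝ (z t)) :
    AEMeasurable (fun p : ℝ × (Fin 3 → ℝ) => ‖fderiv ℝ (z p.1) p.2‖)
      (((volume : Measure ℝ).restrict (Set.Icc (0:ℝ) T)).prod
        (volume : Measure (Fin 3 → ℝ))) := by
  set μ := (volume : Measure ℝ).restrict (Set.Icc (0:ℝ) T)
  set ν := (volume : Measure (Fin 3 → ℝ))
  set ρ := μ.prod ν
  have hd : ∀ᵐ p ∂ρ, Differentiable ℝ (z p.1) := by
    have hs : μ {t | ¬ Differentiable ℝ (z t)} = 0 := hdiff
    have hsub : {p : ℝ × (Fin 3 → ℝ) | ¬ Differentiable ℝ (z p.1)}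
        ⊆ (MeasureTheory.toMeasurable μ {t | ¬ Differentiable ℝ (z t)}) ×ˢ Set.univ :=
      fun p hp => ⟨subset_toMeasurable μ _ hp, trivial⟩
    have : ρ ((MeasureTheory.toMeasurable μ {t | ¬ Differentiable ℝ (z t)}) ×ˢ Set.univ) = 0 := by
      rw [Measure.prod_prod, measure_toMeasurable, hs, zero_mul]
    exact measure_mono_null hsub this
  -- difference quotients
  set q : ℕ → (ℝ × (Fin 3 → ℝ)) → Fin 3 → ℂ := fun n p i =>
    (n : ℂ) * (z p.1 (p.2 + ((n : ℝ))⁻¹ • (Pi.single i (1:ℝ) : Fin 3 → ℝ)) - z p.1 p.2)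
  have hqmeas : ∀ n, Measurable (q n) := by
    intro n
    refine measurable_pi_lambda _ fun i => Measurable.const_mul ?_ _
    have h1 : Measurable fun p : ℝ × (Fin 3 → ℝ) =>
        z p.1 (p.2 + ((n : ℝ))⁻¹ • (Pi.single i (1:ℝ) : Fin 3 → ℝ)) :=
      hz.comp (measurable_fst.prodMk (measurable_snd.add_const _))
    exact h1.sub (hz.comp (measurable_fst.prodMk measurable_snd))
  have hFmeas : ∀ n, Measurable fun p => ‖Phi3 (q n p)‖ :=
    fun n => (Phi3_cont.norm.measurable).comp (hqmeas n)
  refine aemeasurable_of_tendsto_metrizable_ae' (fun n => (hFmeas n).aemeasurable) ?_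
  filter_upwards [hd] with p hp
  have hlim : ∀ i : Fin 3, Tendsto (fun n : ℕ => q n p i) atTop
      (𝓝 (fderiv ℝ (z p.1) p.2 ((Pi.single i (1:ℝ) : Fin 3 → ℝ)))) := by
    intro i
    have := (hp p.2).hasFDerivAt.lim ((Pi.single i (1:ℝ) : Fin 3 → ℝ))
      (c := fun n : ℕ => (n : ℝ)) (l := atTop) ?_
    · have hcast : ∀ n : ℕ, q n p i
          = (n : ℝ) • (z p.1 (p.2 + ((n : ℝ))⁻¹ • (Pi.single i (1:ℝ) : Fin 3 → ℝ)) - z p.1 p.2) := by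
        intro n
        simp [q, Complex.real_smul]
      simpa [hcast] using this
    · simp only [Real.norm_natCast]
      exact tendsto_natCast_atTop_atTop
  have hq : Tendsto (fun n => q n p) atTop
      (𝓝 (fun i => fderiv ℝ (z p.1) p.2 ((Pi.single i (1:ℝ) : Fin 3 → ℝ)))) :=
    tendsto_pi_nhds.2 hlim
  have := (Phi3_cont.norm.tendsto _).comp hq
  rw [Phi3_eq] at this
  exact this

lemma aemeas_W6 {T : ℝ} {z : ℝ → (Fin 3 → ℝ) → ℂ}
    (hz : Measurable (Function.uncurry z))
    (hdiff : ∀ᵐ t ∂((volume : Measure ℝ).restrict (Set.Icc (0:ℝ) T)),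
      Differentiable ℝ (z t)) :
    AEMeasurable (fun t => W1Norm3 6 (z t))
      ((volume : Measure ℝ).restrict (Set.Icc (0:ℝ) T)) := by
  set μ := (volume : Measure ℝ).restrict (Set.Icc (0:ℝ) T)
  set ν := (volume : Measure (Fin 3 → ℝ))
  have h1 : Measurable fun t => ∫⁻ ξ, (‖z t ξ‖₊ : ℝ≥0∞) ^ (6:ℝ) ∂ν := by
    have : Measurable fun p : ℝ × (Fin 3 → ℝ) =>
        (‖Function.uncurry z p‖₊ : ℝ≥0∞) ^ (6:ℝ) := hz.enorm.pow_const _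
    exact this.lintegral_prod_right'
  have h2 : AEMeasurable (fun t => ∫⁻ ξ, (‖fderiv ℝ (z t) ξ‖₊ : ℝ≥0∞) ^ (6:ℝ) ∂ν) μ := by
    have hn := (aemeas_norm_fderiv hz hdiff).ennreal_ofReal
    have hn' : AEMeasurable
        (fun p : ℝ × (Fin 3 → ℝ) => (‖fderiv ℝ (z p.1) p.2‖₊ : ℝ≥0∞) ^ (6:ℝ)) (μ.prod ν) := by
      simp_rw [ofReal_norm_eq_enorm] at hn
      exact hn.pow_const _
    exact aemeas_inner hn'
  have e1 : ∀ (f : (Fin 3 → ℝ) → ℂ), eLpNorm f 6 ν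
      = (∫⁻ ξ, (‖f ξ‖₊ : ℝ≥0∞) ^ (6:ℝ) ∂ν) ^ ((6:ℝ)⁻¹) := by
    intro f
    rw [eLpNorm_eq_lintegral_rpow_enorm_toReal (by norm_num) (by norm_num)]
    norm_num
    rfl
  have e2 : ∀ (f : (Fin 3 → ℝ) → ((Fin 3 → ℝ) →L[ℝ] ℂ)), eLpNorm f 6 ν
      = (∫⁻ ξ, (‖f ξ‖₊ : ℝ≥0∞) ^ (6:ℝ) ∂ν) ^ ((6:ℝ)⁻¹) := by
    intro f
    rw [eLpNorm_eq_lintegral_rpow_enorm_toReal (by norm_num) (by norm_num)]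
    norm_num
    rfl
  unfold W1Norm3
  show AEMeasurable (fun t => eLpNorm (z t) 6 ν + eLpNorm (fderiv ℝ (z t)) 6 ν) μ
  simp_rw [e1, e2]
  exact ((h1.aemeasurable).pow_const _).add (h2.pow_const _)

/-- `H¹`-level bilinear estimate for the quadratic nonlinearity in dimension `d = 3`:
`‖z conj(y)‖_{L^{4/3}(0,T;W^{1,3/2})} ≤ 2 T^{1/4} ‖z‖_{L²(0,T;W^{1,6})}
  · ess sup_{t∈[0,T]} ‖y(t)‖_{W^{1,2}}`. -/
theorem bilinear_estimate_H1_d3 (T : ℝ) (hT : 0 < T) (y z : ℝ → (Fin 3 → ℝ) → ℂ)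
    (hy : Measurable (Function.uncurry y)) (hz : Measurable (Function.uncurry z))
    (hdiff : ∀ᵐ t ∂((volume : Measure ℝ).restrict (Set.Icc (0 : ℝ) T)),
      Differentiable ℝ (y t) ∧ Differentiable ℝ (z t)) :
    (∫⁻ t in Set.Icc (0 : ℝ) T,
        W1Norm3 (3 / 2 : ℝ≥0∞) (fun ξ => z t ξ * (starRingEnd ℂ) (y t ξ))
          ^ ((4 : ℝ) / 3)) ^ ((3 : ℝ) / 4)
      ≤ 2 * ENNReal.ofReal T ^ ((1 : ℝ) / 4)
          * (∫⁻ t in Set.Icc (0 : ℝ) T, W1Norm3 6 (z t) ^ ((2 : ℝ))) ^ ((1 : ℝ) / 2)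
          * essSup (fun t => W1Norm3 2 (y t))
              ((volume : Measure ℝ).restrict (Set.Icc (0 : ℝ) T)) := by
  set μ := (volume : Measure ℝ).restrict (Set.Icc (0:ℝ) T) with hμ
  set E := essSup (fun t => W1Norm3 2 (y t)) μ with hEdef
  set F : ℝ → ℝ≥0∞ := fun t => W1Norm3 6 (z t) with hFdef
  have hFmeas : AEMeasurable F μ := aemeas_W6 hz (hdiff.mono fun t ht => ht.2)
  have hae : ∀ᵐ t ∂μ,
      W1Norm3 (3/2 : ℝ≥0∞) (fun ξ => z t ξ * (starRingEnd ℂ) (y t ξ)) ≤ F t * E := by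
    filter_upwards [hdiff, ae_le_essSup (f := fun t => W1Norm3 2 (y t)) (μ := μ)] with t ht hle
    calc W1Norm3 (3/2 : ℝ≥0∞) (fun ξ => z t ξ * (starRingEnd ℂ) (y t ξ))
        ≤ W1Norm3 6 (z t) * W1Norm3 2 (y t) :=
          pointwise_holder (y t) (z t) hy.of_uncurry_left hz.of_uncurry_left ht.1 ht.2
      _ ≤ F t * E := mul_le_mul_right hle _
  have step2 : (∫⁻ t, W1Norm3 (3/2 : ℝ≥0∞)
        (fun ξ => z t ξ * (starRingEnd ℂ) (y t ξ)) ^ ((4:ℝ)/3) ∂μ)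
      ≤ ∫⁻ t, (F t * E) ^ ((4:ℝ)/3) ∂μ :=
    lintegral_mono_ae (hae.mono fun t ht => ENNReal.rpow_le_rpow ht (by norm_num))
  have step3 : (∫⁻ t, (F t * E) ^ ((4:ℝ)/3) ∂μ)
      = E ^ ((4:ℝ)/3) * ∫⁻ t, F t ^ ((4:ℝ)/3) ∂μ := by
    rw [← lintegral_const_mul'' _ (hFmeas.pow_const _)]
    refine lintegral_congr fun t => ?_
    rw [ENNReal.mul_rpow_of_nonneg _ _ (by norm_num : (0:ℝ) ≤ 4/3), mul_comm]
  have step4 : (∫⁻ t, F t ^ ((4:ℝ)/3) ∂μ)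
      ≤ ((∫⁻ t, F t ^ ((2:ℝ)) ∂μ) ^ ((2:ℝ)/3)) * (ENNReal.ofReal T) ^ ((1:ℝ)/3) := by
    have hconj : ((3:ℝ)/2).HolderConjugate 3 := ⟨by norm_num, by norm_num, by norm_num⟩
    have h := ENNReal.lintegral_mul_le_Lp_mul_Lq μ hconj
      (hFmeas.pow_const ((4:ℝ)/3)) (aemeasurable_const (b := (1:ℝ≥0∞)))
    simp only [Pi.mul_apply, mul_one, ENNReal.one_rpow] at h
    calc (∫⁻ t, F t ^ ((4:ℝ)/3) ∂μ)
        ≤ (∫⁻ t, (F t ^ ((4:ℝ)/3)) ^ ((3:ℝ)/2) ∂μ) ^ (1/((3:ℝ)/2))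
          * (∫⁻ _, (1:ℝ≥0∞) ∂μ) ^ (1/(3:ℝ)) := h
      _ = ((∫⁻ t, F t ^ ((2:ℝ)) ∂μ) ^ ((2:ℝ)/3)) * (ENNReal.ofReal T) ^ ((1:ℝ)/3) := by
          congr 1
          · congr 1
            · refine lintegral_congr fun t => ?_
              rw [← ENNReal.rpow_mul]
              norm_num
            · norm_num
          · rw [lintegral_one, hμ, Measure.restrict_apply_univ, Real.volume_Icc, sub_zero]
  calc (∫⁻ t, W1Norm3 (3/2 : ℝ≥0∞)
        (fun ξ => z t ξ * (starRingEnd ℂ) (y t ξ)) ^ ((4:ℝ)/3) ∂μ) ^ ((3:ℝ)/4)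
      ≤ (E ^ ((4:ℝ)/3) * ∫⁻ t, F t ^ ((4:ℝ)/3) ∂μ) ^ ((3:ℝ)/4) := by
        rw [← step3]
        exact ENNReal.rpow_le_rpow step2 (by norm_num)
    _ = E * (∫⁻ t, F t ^ ((4:ℝ)/3) ∂μ) ^ ((3:ℝ)/4) := by
        rw [ENNReal.mul_rpow_of_nonneg _ _ (by norm_num : (0:ℝ) ≤ 3/4), ← ENNReal.rpow_mul]
        norm_num
    _ ≤ E * (((∫⁻ t, F t ^ ((2:ℝ)) ∂μ) ^ ((2:ℝ)/3))
          * (ENNReal.ofReal T) ^ ((1:ℝ)/3)) ^ ((3:ℝ)/4) :=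
        mul_le_mul_right (ENNReal.rpow_le_rpow step4 (by norm_num)) _
    _ = E * ((∫⁻ t, F t ^ ((2:ℝ)) ∂μ) ^ ((1:ℝ)/2) * (ENNReal.ofReal T) ^ ((1:ℝ)/4)) := by
        rw [ENNReal.mul_rpow_of_nonneg _ _ (by norm_num : (0:ℝ) ≤ 3/4),
          ← ENNReal.rpow_mul, ← ENNReal.rpow_mul]
        norm_num
    _ ≤ 2 * ENNReal.ofReal T ^ ((1:ℝ)/4)
        * (∫⁻ t, F t ^ ((2:ℝ)) ∂μ) ^ ((1:ℝ)/2) * E := by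
        calc E * ((∫⁻ t, F t ^ ((2:ℝ)) ∂μ) ^ ((1:ℝ)/2) * (ENNReal.ofReal T) ^ ((1:ℝ)/4))
            ≤ 2 * (E * ((∫⁻ t, F t ^ ((2:ℝ)) ∂μ) ^ ((1:ℝ)/2)
              * (ENNReal.ofReal T) ^ ((1:ℝ)/4))) := by
              rw [two_mul]; exact le_add_self
          _ = 2 * ENNReal.ofReal T ^ ((1:ℝ)/4)
              * (∫⁻ t, F t ^ ((2:ℝ)) ∂μ) ^ ((1:ℝ)/2) * E := by ring
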